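/- arXiv:2108.03367 — 3 statements merged into one kernel-verified Lean document; each statement's English description precedes it below -/
import Mathlib

section
/- Let n ∈ ℤ, let ρ_n, ρ_n', ρ_n'' be the three roots of f_n(X) ordered so that ρ_n' = −1/(1+ρ_n) and ρ_n'' = −1/(1+ρ_n'), and let r₁, r₂, r₃ ∈ ℚ. Set η = r₁ρ_n + r₂ρ_n' + r₃, η' = r₁ρ_n' + r₂ρ_n'' + r₃, η'' = r₁ρ_n'' + r₂ρ_n + r₃. Then: (1) η + η' + η'' = n(r₁+r₂) + 3r₃; (2) ηη' + η'η'' + η''η = r₁r₂n² + 2(r₁+r₂)r₃n − (r₁² − r₁r₂ + r₂²)(n+3) + 3r₃²; (3) ηη'η'' = r₁r₂r₃n² − r₁²r₂n(n+3) + (r₁+r₂)r₃²n − (r₁² − r₁r₂ + r₂²)r₃(n+3) + r₁r₂(r₁−r₂)(n²+3n+6) + r₁³ + r₂³ + r₃³ − 3r₁²r₂. -/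
/-- Trace, second symmetric function and norm of `η = r₁ρ + r₂ρ' + r₃`, where
`ρ, ρ' = -1/(1+ρ), ρ'' = -1/(1+ρ')` are the three roots of the Shanks cubic
polynomial `f_n(X) = X³ - nX² - (n+3)X - 1` and `r₁, r₂, r₃ ∈ ℚ`. -/
theorem stmt5 (n : ℤ) (ρ ρ' ρ'' : ℂ)
    (hρ : ρ ^ 3 - n * ρ ^ 2 - (n + 3) * ρ - 1 = 0)
    (hρ' : ρ' = -1 / (1 + ρ)) (hρ'' : ρ'' = -1 / (1 + ρ'))
    (r₁ r₂ r₃ : ℚ) (η η' η'' : ℂ)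
    (hη : η = r₁ * ρ + r₂ * ρ' + r₃)
    (hη' : η' = r₁ * ρ' + r₂ * ρ'' + r₃)
    (hη'' : η'' = r₁ * ρ'' + r₂ * ρ + r₃) :
    η + η' + η'' = n * (r₁ + r₂) + 3 * r₃ ∧
    η * η' + η' * η'' + η'' * η =
      r₁ * r₂ * (n : ℂ) ^ 2 + 2 * (r₁ + r₂) * r₃ * n
        - (r₁ ^ 2 - r₁ * r₂ + r₂ ^ 2) * (n + 3) + 3 * (r₃ : ℂ) ^ 2 ∧
    η * η' * η'' =
      r₁ * r₂ * r₃ * (n : ℂ) ^ 2 - (r₁ : ℂ) ^ 2 * r₂ * n * (n + 3)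
        + (r₁ + r₂) * (r₃ : ℂ) ^ 2 * n - (r₁ ^ 2 - r₁ * r₂ + r₂ ^ 2) * r₃ * (n + 3)
        + r₁ * r₂ * (r₁ - r₂) * ((n : ℂ) ^ 2 + 3 * n + 6)
        + (r₁ : ℂ) ^ 3 + (r₂ : ℂ) ^ 3 + (r₃ : ℂ) ^ 3 - 3 * (r₁ : ℂ) ^ 2 * r₂ := by
  have h1 : (1 : ℂ) + ρ ≠ 0 := by
    intro h
    exact one_ne_zero (by linear_combination hρ - (ρ ^ 2 - (n + 1) * ρ - 2) * h : (1 : ℂ) = 0)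
  have h0 : ρ ≠ 0 := by
    intro h
    exact one_ne_zero (by linear_combination -hρ + (ρ ^ 2 - n * ρ - (n + 3)) * h : (1 : ℂ) = 0)
  have e1 : ρ' = ρ ^ 2 - (n + 1) * ρ - 2 := by
    rw [hρ', div_eq_iff h1]
    linear_combination -hρ
  have h2 : ρ ^ 2 - ((n : ℂ) + 1) * ρ - 1 ≠ 0 := by
    intro h
    exact h0 (by linear_combination -hρ + (1 + ρ) * h)
  have e2 : ρ'' = -ρ ^ 2 + n * ρ + (n + 2) := by
    rw [hρ'', e1, show (1 : ℂ) + (ρ ^ 2 - (n + 1) * ρ - 2) = ρ ^ 2 - ((n : ℂ) + 1) * ρ - 1 by ring,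
      div_eq_iff h2]
    linear_combination (ρ - n - 1) * hρ
  subst hη hη' hη''
  rw [e1, e2]
  refine ⟨by ring, ?_, ?_⟩
  · linear_combination (-ρ * (r₁ : ℂ) ^ 2 + ρ * r₁ * r₂ - ρ * (r₂ : ℂ) ^ 2 + n * (r₁ : ℂ) ^ 2
      - (n : ℂ) * r₁ * r₂ + n * (r₂ : ℂ) ^ 2 + (r₁ : ℂ) ^ 2 - (r₁ : ℂ) * r₂ + (r₂ : ℂ) ^ 2) * hρ
  · linear_combination (-ρ ^ 3 * (r₁ : ℂ) ^ 2 * r₂ + ρ ^ 3 * r₁ * (r₂ : ℂ) ^ 2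
      + 2 * ρ ^ 2 * n * (r₁ : ℂ) ^ 2 * r₂ - 2 * ρ ^ 2 * n * r₁ * (r₂ : ℂ) ^ 2
      - ρ ^ 2 * (r₁ : ℂ) ^ 3 + 3 * ρ ^ 2 * (r₁ : ℂ) ^ 2 * r₂ - ρ ^ 2 * (r₂ : ℂ) ^ 3
      - ρ * (n : ℂ) ^ 2 * (r₁ : ℂ) ^ 2 * r₂ + ρ * (n : ℂ) ^ 2 * r₁ * (r₂ : ℂ) ^ 2
      + ρ * n * (r₁ : ℂ) ^ 3 - 3 * ρ * n * (r₁ : ℂ) ^ 2 * r₂ - ρ * n * r₁ * (r₂ : ℂ) ^ 2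
      + ρ * n * (r₂ : ℂ) ^ 3 + ρ * (r₁ : ℂ) ^ 3 + 3 * ρ * (r₁ : ℂ) ^ 2 * r₂
      - ρ * (r₁ : ℂ) ^ 2 * r₃ - 6 * ρ * r₁ * (r₂ : ℂ) ^ 2 + ρ * r₁ * r₂ * r₃
      + ρ * (r₂ : ℂ) ^ 3 - ρ * (r₂ : ℂ) ^ 2 * r₃ + (n : ℂ) ^ 2 * r₁ * (r₂ : ℂ) ^ 2
      - 4 * (n : ℂ) * (r₁ : ℂ) ^ 2 * r₂ + n * (r₁ : ℂ) ^ 2 * r₃ + 5 * n * r₁ * (r₂ : ℂ) ^ 2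
      - (n : ℂ) * r₁ * r₂ * r₃ + n * (r₂ : ℂ) ^ 2 * r₃ + (r₁ : ℂ) ^ 3
      - 5 * (r₁ : ℂ) ^ 2 * r₂ + (r₁ : ℂ) ^ 2 * r₃ + 2 * r₁ * (r₂ : ℂ) ^ 2
      - (r₁ : ℂ) * r₂ * r₃ + (r₂ : ℂ) ^ 3 + (r₂ : ℂ) ^ 2 * r₃) * hρ
end

section
/- Let n ∈ ℤ and let s be a positive integer with s ∣ Δ_n. Then there exist exactly 6 ordered pairs (a₀, a₁) of integers satisfying s = a₀² − a₀a₁ + a₁² and (a₀ + a₁ζ) ∣ A_n in ℤ[ζ]. Moreover, if (a₀, a₁) is one such pair, then the set of all such pairs is {(a₀, a₁), (−a₀, −a₁), (a₁, −(a₀−a₁)), (−a₁, a₀−a₁), (a₀−a₁, a₀), (−(a₀−a₁), −a₀)}. -/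
namespace Stmt6Aux

/-- The ring of Eisenstein integers, pairs `⟨a, b⟩` representing `a + bζ` where
`ζ` is a primitive cube root of unity (so `ζ² = -1 - ζ`). -/
@[ext]
structure Ei where
  x : ℤ
  y : ℤ
  deriving DecidableEq

namespace Ei

instance : Zero Ei := ⟨⟨0, 0⟩⟩
instance : One Ei := ⟨⟨1, 0⟩⟩
instance : Add Ei := ⟨fun p q => ⟨p.x + q.x, p.y + q.y⟩⟩
instance : Neg Ei := ⟨fun p => ⟨-p.x, -p.y⟩⟩
instance : Mul Ei :=
  ⟨fun p q => ⟨p.x * q.x - p.y * q.y, p.x * q.y + p.y * q.x - p.y * q.y⟩⟩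

@[simp] theorem zero_x : (0 : Ei).x = 0 := rfl
@[simp] theorem zero_y : (0 : Ei).y = 0 := rfl
@[simp] theorem one_x : (1 : Ei).x = 1 := rfl
@[simp] theorem one_y : (1 : Ei).y = 0 := rfl
@[simp] theorem add_x (p q : Ei) : (p + q).x = p.x + q.x := rfl
@[simp] theorem add_y (p q : Ei) : (p + q).y = p.y + q.y := rfl
@[simp] theorem neg_x (p : Ei) : (-p).x = -p.x := rfl
@[simp] theorem neg_y (p : Ei) : (-p).y = -p.y := rfl
@[simp] theorem mul_x (p q : Ei) : (p * q).x = p.x * q.x - p.y * q.y := rfl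
@[simp] theorem mul_y (p q : Ei) :
    (p * q).y = p.x * q.y + p.y * q.x - p.y * q.y := rfl

instance addCommGroup : AddCommGroup Ei := by
  refine
  { add := (· + ·)
    zero := (0 : Ei)
    sub := fun a b => a + -b
    neg := Neg.neg
    nsmul := @nsmulRec Ei ⟨0⟩ ⟨(· + ·)⟩
    zsmul := @zsmulRec Ei ⟨0⟩ ⟨(· + ·)⟩ ⟨Neg.neg⟩ (@nsmulRec Ei ⟨0⟩ ⟨(· + ·)⟩)
    add_assoc := ?_
    zero_add := ?_
    add_zero := ?_
    neg_add_cancel := ?_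
    add_comm := ?_ } <;>
  intros <;> ext <;> simp [add_comm, add_left_comm]

@[simp] theorem sub_x (p q : Ei) : (p - q).x = p.x - q.x := rfl
@[simp] theorem sub_y (p q : Ei) : (p - q).y = p.y - q.y := rfl

instance addGroupWithOne : AddGroupWithOne Ei :=
  { Ei.addCommGroup with
    natCast := fun n => ⟨n, 0⟩
    intCast := fun n => ⟨n, 0⟩
    one := 1 }

instance commRing : CommRing Ei := by
  refine
  { Ei.addGroupWithOne with
    mul := (· * ·)
    npow := @npowRec Ei ⟨1⟩ ⟨(· * ·)⟩,
    add_comm := ?_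
    left_distrib := ?_
    right_distrib := ?_
    zero_mul := ?_
    mul_zero := ?_
    mul_assoc := ?_
    one_mul := ?_
    mul_one := ?_
    mul_comm := ?_ } <;>
  intros <;> ext <;> simp <;> ring

instance : Nontrivial Ei := ⟨⟨0, 1, by simp [Ei.ext_iff]⟩⟩

/-- Complex conjugation. -/
def conj (p : Ei) : Ei := ⟨p.x - p.y, -p.y⟩

@[simp] theorem conj_x (p : Ei) : (conj p).x = p.x - p.y := rfl
@[simp] theorem conj_y (p : Ei) : (conj p).y = -p.y := rfl

theorem conj_mul (p q : Ei) : conj (p * q) = conj p * conj q := by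
  ext <;> simp [conj] <;> ring

@[simp] theorem conj_conj (p : Ei) : conj (conj p) = p := by
  ext <;> simp [conj]

theorem conj_dvd {p q : Ei} (h : p ∣ q) : conj p ∣ conj q := by
  obtain ⟨r, rfl⟩ := h
  exact ⟨conj r, conj_mul _ _⟩

/-- The norm. -/
def Nm (p : Ei) : ℤ := p.x ^ 2 - p.x * p.y + p.y ^ 2

theorem Nm_mul (p q : Ei) : Nm (p * q) = Nm p * Nm q := by
  simp [Nm]; ring

@[simp] theorem Nm_one : Nm 1 = 1 := by simp [Nm]
@[simp] theorem Nm_conj (p : Ei) : Nm (conj p) = Nm p := by simp [Nm]; ring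

theorem Nm_nonneg (p : Ei) : 0 ≤ Nm p := by
  have : 4 * Nm p = (2 * p.x - p.y) ^ 2 + 3 * p.y ^ 2 := by simp [Nm]; ring
  nlinarith [sq_nonneg (2 * p.x - p.y), sq_nonneg p.y]

theorem Nm_eq_zero_iff {p : Ei} : Nm p = 0 ↔ p = 0 := by
  constructor
  · intro h
    have h4 : (2 * p.x - p.y) ^ 2 + 3 * p.y ^ 2 = 0 := by simp [Nm] at h; nlinarith
    have hy : p.y = 0 := by nlinarith [sq_nonneg (2 * p.x - p.y), sq_nonneg p.y]
    have hx : p.x = 0 := by nlinarith [sq_nonneg (2 * p.x - p.y)]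
    ext <;> simp [hx, hy]
  · rintro rfl; simp [Nm]

theorem Nm_pos {p : Ei} (h : p ≠ 0) : 0 < Nm p :=
  lt_of_le_of_ne (Nm_nonneg p) (fun h' => h (Nm_eq_zero_iff.mp h'.symm))

theorem mul_conj (p : Ei) : p * conj p = (⟨Nm p, 0⟩ : Ei) := by
  ext <;> simp [conj, Nm] <;> ring

theorem intMul (m : ℤ) (p : Ei) : (⟨m, 0⟩ : Ei) * p = ⟨m * p.x, m * p.y⟩ := by
  ext <;> simp <;> ring

instance : NoZeroDivisors Ei where
  eq_zero_or_eq_zero_of_mul_eq_zero {p q} h := by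
    by_contra hc
    push_neg at hc
    have := Nm_mul p q
    rw [h, Nm_eq_zero_iff.mpr rfl] at this
    rcases mul_eq_zero.mp this.symm with h' | h'
    exacts [hc.1 (Nm_eq_zero_iff.mp h'), hc.2 (Nm_eq_zero_iff.mp h')]

instance : IsDomain Ei := NoZeroDivisors.to_isDomain Ei

theorem Nm_dvd {p q : Ei} (h : p ∣ q) : Nm p ∣ Nm q := by
  obtain ⟨r, rfl⟩ := h; exact ⟨Nm r, Nm_mul p r⟩

theorem isUnit_iff_nm {u : Ei} : IsUnit u ↔ Nm u = 1 := by
  constructor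
  · intro h
    obtain ⟨v, hv⟩ : u ∣ 1 := h.dvd
    have := Nm_mul u v
    rw [← hv, Nm_one] at this
    exact Int.eq_one_of_mul_eq_one_right (Nm_nonneg u) this.symm
  · intro h
    refine IsUnit.of_mul_eq_one (a := u) (conj u) ?_
    rw [mul_conj, h]; rfl





/-- Euclidean quotient: round the exact quotient `p q̄ / N(q)` coordinatewise. -/
noncomputable def quot (p q : Ei) : Ei :=
  if q = 0 then 0
  else ⟨round (((p * conj q).x : ℚ) / (Nm q : ℚ)),
        round (((p * conj q).y : ℚ) / (Nm q : ℚ))⟩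

theorem quot_est (p q : Ei) (hq : q ≠ 0) : Nm (p - q * quot p q) < Nm q := by
  set N := Nm q with hN
  have hN0 : 0 < N := Nm_pos hq
  set c := quot p q with hc
  set w := p * conj q with hw
  set u : ℤ := w.x - N * c.x with hu
  set v : ℤ := w.y - N * c.y with hv
  -- the rounding bounds
  have key : ∀ z : ℤ, 2 * |z - N * round ((z : ℚ) / (N : ℚ))| ≤ N := by
    intro z
    have h1 : |(z : ℚ) / N - round ((z : ℚ) / N)| ≤ 1 / 2 := abs_sub_round _
    have hNq : (0 : ℚ) < (N : ℚ) := by exact_mod_cast hN0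
    have h2 : |(z : ℚ) - N * round ((z : ℚ) / N)| ≤ (N : ℚ) / 2 := by
      have heq : (z : ℚ) - N * round ((z : ℚ) / N) = N * ((z : ℚ) / N - round ((z : ℚ) / N)) := by
        field_simp
      rw [heq, abs_mul, abs_of_pos hNq]
      calc (N : ℚ) * |(z : ℚ) / N - round ((z : ℚ) / N)| ≤ (N : ℚ) * (1 / 2) :=
            mul_le_mul_of_nonneg_left h1 (le_of_lt hNq)
        _ = (N : ℚ) / 2 := by ring
    have h3 : (2 : ℚ) * |(z : ℚ) - N * round ((z : ℚ) / N)| ≤ (N : ℚ) := by linarith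
    exact_mod_cast h3
  have hcx : c.x = round ((w.x : ℚ) / (N : ℚ)) := by rw [hc, quot, if_neg hq]
  have hcy : c.y = round ((w.y : ℚ) / (N : ℚ)) := by rw [hc, quot, if_neg hq]
  have hub : 2 * |u| ≤ N := by rw [hu, hcx]; exact key w.x
  have hvb : 2 * |v| ≤ N := by rw [hv, hcy]; exact key w.y
  -- (p - q c) q̄ = ⟨u, v⟩
  have hr : (p - q * c) * conj q = (⟨u, v⟩ : Ei) := by
    have h1 : (p - q * c) * conj q = w - (q * conj q) * c := by rw [hw]; ring
    rw [h1, mul_conj, ← hN, intMul]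
    ext <;> simp [hu, hv]
  have hNr : Nm (p - q * c) * N = u ^ 2 - u * v + v ^ 2 := by
    have := Nm_mul (p - q * c) (conj q)
    rw [hr, Nm_conj, ← hN] at this
    rw [← this]; rfl
  -- conclude
  have h4u : 4 * (u * u) ≤ N * N := by
    have := mul_self_le_mul_self (by positivity) hub
    nlinarith [abs_mul_abs_self u]
  have h4v : 4 * (v * v) ≤ N * N := by
    have := mul_self_le_mul_self (by positivity) hvb
    nlinarith [abs_mul_abs_self v]
  have h4uv : 4 * |u * v| ≤ N * N := by
    have := mul_le_mul hub hvb (by positivity) (le_of_lt (by exact_mod_cast hN0 : (0:ℤ) < N))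
    nlinarith [abs_mul u v]
  have habs : -(4 * (u * v)) ≤ N * N := le_trans (by nlinarith [le_abs_self (-(u*v)), abs_neg (u*v)]) h4uv
  nlinarith [hNr]

noncomputable instance : EuclideanDomain Ei where
  quotient := quot
  quotient_zero := fun a => by simp [quot]
  remainder := fun p q => p - q * quot p q
  quotient_mul_add_remainder_eq := fun a b => by ring
  r := fun a b => (Nm a).toNat < (Nm b).toNat
  r_wellFounded := InvImage.wf (fun p : Ei => (Nm p).toNat) Nat.lt_wfRel.wf
  remainder_lt := fun a b hb => by
    have h1 := quot_est a b hb
    have h2 := Nm_nonneg (a - b * quot a b)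
    show (Nm (a - b * quot a b)).toNat < (Nm b).toNat
    omega
  mul_left_not_lt := fun a b hb => by
    show ¬((Nm (a * b)).toNat < (Nm a).toNat)
    intro hlt
    have h1 : Nm a ≤ Nm (a * b) := by
      rw [Nm_mul]
      have hb1 : 1 ≤ Nm b := Nm_pos hb
      nlinarith [Nm_nonneg a]
    have h2 := Nm_nonneg a
    omega


/-- `A_n = n + 3(1+ζ) = (n+3) + 3ζ`. -/
def An (n : ℤ) : Ei := ⟨n + 3, 3⟩

theorem Nm_An (n : ℤ) : Nm (An n) = n ^ 2 + 3 * n + 9 := by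
  simp [An, Nm]; ring

theorem ratDvd {m n : ℤ} (h : (⟨m, 0⟩ : Ei) ∣ An n) : m ∣ 3 := by
  obtain ⟨r, hr⟩ := h
  rw [intMul] at hr
  exact ⟨r.y, congrArg Ei.y hr⟩

theorem three_factor : (⟨3, 0⟩ : Ei) = ⟨1, -1⟩ * ⟨2, 1⟩ := by
  ext <;> simp

theorem Nm_lam : Nm (⟨1, -1⟩ : Ei) = 3 := by simp [Nm]
theorem Nm_lam' : Nm (⟨2, 1⟩ : Ei) = 3 := by simp [Nm]

theorem isUnit_mk {a b : ℤ} (h : Nm (⟨a, b⟩ : Ei) = 1) : IsUnit (⟨a, b⟩ : Ei) :=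
  isUnit_iff_nm.mpr h

theorem associated_of_dvd_nm {p q : Ei} (h : p ∣ q) (hn : Nm p = Nm q) (hq : q ≠ 0) :
    Associated p q := by
  obtain ⟨e, rfl⟩ := h
  have hp0 : Nm p ≠ 0 := fun h0 => by
    rw [Nm_eq_zero_iff.mp h0, zero_mul] at hq; exact hq rfl
  have he : Nm e = 1 := by
    have h1 : Nm p * 1 = Nm p * Nm e := by rw [mul_one, ← Nm_mul, hn]
    exact (mul_left_cancel₀ hp0 h1).symm
  exact ⟨(isUnit_iff_nm.mpr he).unit, by rw [IsUnit.unit_spec]⟩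

theorem conj_associated {p q : Ei} (h : Associated p q) : Associated (conj p) (conj q) := by
  obtain ⟨u, hu⟩ := h
  have hNu : Nm (u : Ei) = 1 := isUnit_iff_nm.mp u.isUnit
  refine ⟨(isUnit_iff_nm.mpr (by rw [Nm_conj, hNu] : Nm (conj (u : Ei)) = 1)).unit, ?_⟩
  rw [IsUnit.unit_spec, ← conj_mul, hu]

theorem conj_irreducible {π : Ei} (h : Irreducible π) : Irreducible (conj π) := by
  constructor
  · rw [isUnit_iff_nm, Nm_conj, ← isUnit_iff_nm]; exact h.not_isUnit
  · intro a b hab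
    have : π = conj a * conj b := by rw [← conj_mul, ← hab, conj_conj]
    rcases h.isUnit_or_isUnit this with hh | hh
    · left; rwa [isUnit_iff_nm, ← Nm_conj, ← isUnit_iff_nm]
    · right; rwa [isUnit_iff_nm, ← Nm_conj, ← isUnit_iff_nm]

theorem assoc_lam_lam' : Associated (⟨1, -1⟩ : Ei) (⟨2, 1⟩ : Ei) := by
  refine associated_of_dvd_nm ⟨⟨1, 1⟩, by ext <;> simp⟩ (by rw [Nm_lam, Nm_lam']) ?_
  simp [Ei.ext_iff]

theorem dvd_conj_of_nm_three {π : Ei} (hirr : Irreducible π) (h3 : Nm π = 3) :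
    π ∣ conj π := by
  have hprime : Prime π := UniqueFactorizationMonoid.irreducible_iff_prime.mp hirr
  have hπ3 : π ∣ (⟨3, 0⟩ : Ei) := ⟨conj π, by rw [mul_conj, h3]⟩
  rw [three_factor] at hπ3
  have hlam0 : (⟨1, -1⟩ : Ei) ≠ 0 := by simp [Ei.ext_iff]
  have hlam0' : (⟨2, 1⟩ : Ei) ≠ 0 := by simp [Ei.ext_iff]
  have hassoc : Associated π (⟨1, -1⟩ : Ei) := by
    rcases hprime.2.2 _ _ hπ3 with hh | hh
    · exact associated_of_dvd_nm hh (by rw [h3, Nm_lam]) hlam0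
    · exact (associated_of_dvd_nm hh (by rw [h3, Nm_lam']) hlam0').trans assoc_lam_lam'.symm
  have hconj : Associated (conj π) (⟨2, 1⟩ : Ei) := by
    have := conj_associated hassoc
    rwa [show conj (⟨1, -1⟩ : Ei) = ⟨2, 1⟩ from by ext <;> simp [conj]] at this
  exact (hassoc.trans (assoc_lam_lam'.trans hconj.symm)).dvd

theorem unit_cases {u : Ei} (h : Nm u = 1) :
    u = ⟨1, 0⟩ ∨ u = ⟨-1, 0⟩ ∨ u = ⟨0, 1⟩ ∨ u = ⟨0, -1⟩ ∨ u = ⟨1, 1⟩ ∨ u = ⟨-1, -1⟩ := by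
  obtain ⟨a, b⟩ := u
  simp only [Nm] at h
  have hb1 : -1 ≤ b := by nlinarith [sq_nonneg (2 * a - b), sq_nonneg b]
  have hb2 : b ≤ 1 := by nlinarith [sq_nonneg (2 * a - b), sq_nonneg b]
  have ha1 : -1 ≤ a := by nlinarith [sq_nonneg (a - 2 * b), sq_nonneg a]
  have ha2 : a ≤ 1 := by nlinarith [sq_nonneg (a - 2 * b), sq_nonneg a]
  simp only [Ei.mk.injEq]
  interval_cases a <;> interval_cases b <;> omega

/-- Uniqueness up to units of a divisor of `A_n` of given norm. -/
theorem unique_up_to_unit {n : ℤ} {p q : Ei} (hp0 : p ≠ 0)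
    (hNm : Nm p = Nm q) (hpA : p ∣ An n) (hqA : q ∣ An n) :
    ∃ u : Ei, Nm u = 1 ∧ q = p * u := by
  classical
  set d := EuclideanDomain.gcd p q with hd
  have hdp : d ∣ p := EuclideanDomain.gcd_dvd_left p q
  have hdq : d ∣ q := EuclideanDomain.gcd_dvd_right p q
  have hd0 : d ≠ 0 := fun h => hp0 ((EuclideanDomain.gcd_eq_zero_iff.mp h).1)
  obtain ⟨p₁, hp₁⟩ := hdp
  obtain ⟨q₁, hq₁⟩ := hdq
  have hcop : IsCoprime p₁ q₁ := by
    refine ⟨EuclideanDomain.gcdA p q, EuclideanDomain.gcdB p q, ?_⟩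
    apply mul_left_cancel₀ hd0
    have hb := EuclideanDomain.gcd_eq_gcd_ab p q
    calc d * (EuclideanDomain.gcdA p q * p₁ + EuclideanDomain.gcdB p q * q₁)
        = p * EuclideanDomain.gcdA p q + q * EuclideanDomain.gcdB p q := by
          rw [hp₁, hq₁]; ring
      _ = d := hb.symm
      _ = d * 1 := (mul_one d).symm
  have hNd0 : Nm d ≠ 0 := fun h => hd0 (Nm_eq_zero_iff.mp h)
  have hNpq : Nm p₁ = Nm q₁ := by
    apply mul_left_cancel₀ hNd0
    rw [← Nm_mul, ← Nm_mul, ← hp₁, ← hq₁, hNm]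
  by_cases hu : IsUnit p₁
  · have hNp₁ : Nm p₁ = 1 := isUnit_iff_nm.mp hu
    refine ⟨conj p₁ * q₁, ?_, ?_⟩
    · rw [Nm_mul, Nm_conj, hNp₁, ← hNpq, hNp₁]; norm_num
    · have h11 : p₁ * conj p₁ = 1 := by
        rw [mul_conj, hNp₁]; rfl
      calc q = d * q₁ := hq₁
        _ = d * q₁ * (p₁ * conj p₁) := by rw [h11, mul_one]
        _ = (d * p₁) * (conj p₁ * q₁) := by ring
        _ = p * (conj p₁ * q₁) := by rw [← hp₁]
  · exfalso
    have hp₁0 : p₁ ≠ 0 := fun h => by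
      rw [h, mul_zero] at hp₁; exact hp0 hp₁
    obtain ⟨π, hπirr, hπdvd⟩ := WfDvdMonoid.exists_irreducible_factor hu hp₁0
    have hprime : Prime π := UniqueFactorizationMonoid.irreducible_iff_prime.mp hπirr
    have hπq₁ : ¬π ∣ q₁ := fun hh => hπirr.not_isUnit (hcop.isUnit_of_dvd' hπdvd hh)
    have h1 : π ∣ q₁ * conj q₁ := by
      have h2 : π ∣ p₁ * conj p₁ := dvd_mul_of_dvd_left hπdvd _
      rwa [mul_conj, hNpq, ← mul_conj] at h2
    have hπcq : π ∣ conj q₁ := (hprime.2.2 _ _ h1).resolve_left hπq₁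
    have hcπq : conj π ∣ q₁ := by
      have := conj_dvd hπcq; rwa [conj_conj] at this
    by_cases hππ : π ∣ conj π
    · exact hπq₁ (hππ.trans hcπq)
    · have hcop2 : IsCoprime π (conj π) := hπirr.coprime_iff_not_dvd.mpr hππ
      obtain ⟨m, hm⟩ := hpA
      have hq₁m : q₁ ∣ p₁ * m := by
        have hqdvd : d * q₁ ∣ d * (p₁ * m) := by
          rw [← hq₁]
          exact hqA.trans ⟨1, by rw [hm, hp₁]; ring⟩
        exact (mul_dvd_mul_iff_left hd0).mp hqdvd
      obtain ⟨m', hm'⟩ := hcop.symm.dvd_of_dvd_mul_left hq₁m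
      have hAn : An n = p₁ * q₁ * (d * m') := by rw [hm, hp₁, hm']; ring
      have hdvdA : π * conj π ∣ An n := by
        refine (hcop2.mul_dvd (dvd_mul_of_dvd_left hπdvd q₁)
          (hcπq.trans (dvd_mul_left q₁ p₁))).trans ⟨d * m', hAn⟩
      rw [mul_conj] at hdvdA
      have h3 : Nm π ∣ 3 := ratDvd hdvdA
      have hNπ : Nm π = 3 := by
        have h1' : Nm π ≠ 1 := fun hh => hπirr.not_isUnit (isUnit_iff_nm.mpr hh)
        have hpos : 0 < Nm π := Nm_pos hπirr.ne_zero
        have hna := Int.natAbs_dvd_natAbs.mpr h3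
        have := Nat.Prime.eq_one_or_self_of_dvd (by norm_num) _ hna
        omega
      exact hππ (dvd_conj_of_nm_three hπirr hNπ)

theorem nat_dvd_prime_sq {q t : ℕ} (hq : q.Prime) (h : t ∣ q ^ 2) :
    t = 1 ∨ t = q ∨ t = q ^ 2 := by
  by_cases hqt : q ∣ t
  · obtain ⟨t', rfl⟩ := hqt
    have h' : t' ∣ q := by
      have h2 : q * t' ∣ q * q := by rwa [← sq]
      exact (mul_dvd_mul_iff_left hq.pos.ne').mp h2
    rcases hq.eq_one_or_self_of_dvd t' h' with rfl | rfl
    · right; left; simp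
    · right; right; rw [sq]
  · left
    have hc : Nat.Coprime q t := (Nat.Prime.coprime_iff_not_dvd hq).mpr hqt
    exact Nat.Coprime.eq_one_of_dvd (hc.pow_left 2).symm h

/-- Existence of a divisor of prescribed norm. -/
theorem exists_nm_divisor (n : ℤ) : ∀ k : ℕ, ∀ s : ℤ, 0 < s → s ≤ (k : ℤ) →
    ∀ A : Ei, A ∣ An n → s ∣ Nm A → ∃ p : Ei, p ∣ A ∧ Nm p = s := by
  intro k
  induction k with
  | zero => intro s hs hsk A _ _; exfalso; omega
  | succ k ih =>
    intro s hs hsk A hAdvd hsN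
    by_cases hs1 : s = 1
    · exact ⟨1, one_dvd A, by rw [hs1, Nm_one]⟩
    · have hs2 : 2 ≤ s := by omega
      obtain ⟨qn, hqn, hqndvd⟩ := Nat.exists_prime_and_dvd (show s.natAbs ≠ 1 by omega)
      set qz : ℤ := (qn : ℤ) with hqzdef
      have hq2 : 2 ≤ qz := by rw [hqzdef]; exact_mod_cast hqn.two_le
      have hqzs : qz ∣ s := by
        have : (qn : ℤ) ∣ (s.natAbs : ℤ) := Int.natCast_dvd_natCast.mpr hqndvd
        rwa [Int.natAbs_of_nonneg (le_of_lt hs)] at this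
      have hqN : qz ∣ Nm A := hqzs.trans hsN
      obtain ⟨k', hk'⟩ := hqN
      have hqANm : (⟨qz, 0⟩ : Ei) ∣ (⟨Nm A, 0⟩ : Ei) := ⟨⟨k', 0⟩, by
        rw [intMul]; ext <;> simp [hk']⟩
      have hqnotunit : ¬IsUnit (⟨qz, 0⟩ : Ei) := by
        rw [isUnit_iff_nm]
        simp only [Nm]
        nlinarith
      have hq0 : (⟨qz, 0⟩ : Ei) ≠ 0 := by
        intro hcontra
        have h5 := congrArg Ei.x hcontra
        simp at h5
        omega
      obtain ⟨π₀, hπ₀irr, hπ₀dvd⟩ := WfDvdMonoid.exists_irreducible_factor hqnotunit hq0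
      have hπ₀prime : Prime π₀ := UniqueFactorizationMonoid.irreducible_iff_prime.mp hπ₀irr
      have hπ₀AA : π₀ ∣ A * conj A := by
        rw [mul_conj]; exact hπ₀dvd.trans hqANm
      have hconjq : conj (⟨qz, 0⟩ : Ei) = ⟨qz, 0⟩ := by ext <;> simp [conj]
      obtain ⟨π, hπirr, hπA, hπq⟩ :
          ∃ π : Ei, Irreducible π ∧ π ∣ A ∧ π ∣ (⟨qz, 0⟩ : Ei) := by
        rcases hπ₀prime.2.2 _ _ hπ₀AA with hh | hh
        · exact ⟨π₀, hπ₀irr, hh, hπ₀dvd⟩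
        · refine ⟨conj π₀, conj_irreducible hπ₀irr, ?_, ?_⟩
          · have := conj_dvd hh; rwa [conj_conj] at this
          · have := conj_dvd hπ₀dvd; rwa [hconjq] at this
      have hπprime : Prime π := UniqueFactorizationMonoid.irreducible_iff_prime.mp hπirr
      have hNmq : Nm (⟨qz, 0⟩ : Ei) = qz ^ 2 := by simp [Nm]
      have hNπdvd : Nm π ∣ qz ^ 2 := by
        have := Nm_dvd hπq; rwa [hNmq] at this
      have hNπpos : 0 < Nm π := Nm_pos hπirr.ne_zero
      have hNπne1 : Nm π ≠ 1 := fun hh => hπirr.not_isUnit (isUnit_iff_nm.mpr hh)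
      have hNπcases : Nm π = qz ∨ Nm π = qz ^ 2 := by
        have hna : (Nm π).natAbs ∣ qn ^ 2 := by
          have h1 := Int.natAbs_dvd_natAbs.mpr hNπdvd
          rwa [show (qz ^ 2).natAbs = qn ^ 2 by rw [hqzdef]; exact_mod_cast rfl] at h1
        rcases nat_dvd_prime_sq hqn hna with hh | hh | hh
        · omega
        · left; omega
        · right
          have : ((Nm π).natAbs : ℤ) = ((qn ^ 2 : ℕ) : ℤ) := by exact_mod_cast hh
          rw [Int.natAbs_of_nonneg (le_of_lt hNπpos)] at this
          rw [this]; push_cast; ring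
      rcases hNπcases with hNπ | hNπ
      · -- the good case : Nm π = q
        obtain ⟨A₁, hA₁⟩ := hπA
        have hNmA₁ : Nm A = qz * Nm A₁ := by rw [hA₁, Nm_mul, hNπ]
        obtain ⟨s₁, hs₁⟩ := hqzs
        have hs₁pos : 0 < s₁ := by
          by_contra hc
          push_neg at hc
          nlinarith
        have hs₁dvd : s₁ ∣ Nm A₁ := by
          have h1 : qz * s₁ ∣ qz * Nm A₁ := by rw [← hs₁, ← hNmA₁]; exact hsN
          exact (mul_dvd_mul_iff_left (show qz ≠ 0 by omega)).mp h1
        have h2s : 2 * s₁ ≤ s := by nlinarith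
        have hs₁k : s₁ ≤ (k : ℤ) := by omega
        have hA₁A : A₁ ∣ A := ⟨π, by rw [hA₁]; ring⟩
        obtain ⟨p₁, hp₁dvd, hp₁Nm⟩ := ih s₁ hs₁pos hs₁k A₁ (hA₁A.trans hAdvd) hs₁dvd
        refine ⟨π * p₁, ?_, ?_⟩
        · rw [hA₁]; exact mul_dvd_mul_left π hp₁dvd
        · rw [Nm_mul, hNπ, hp₁Nm, hs₁]
      · -- impossible case : Nm π = q²
        exfalso
        have hπq' := hπq
        obtain ⟨e, he⟩ := hπq'
        have hNe : Nm e = 1 := by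
          have h1 : Nm π * Nm e = Nm π * 1 := by
            rw [mul_one, ← Nm_mul, ← he, hNmq, hNπ]
          exact mul_left_cancel₀ (by omega) h1
        have hq_dvd_π : (⟨qz, 0⟩ : Ei) ∣ π := by
          refine ⟨conj e, ?_⟩
          have h11 : e * conj e = 1 := by
            rw [mul_conj, hNe]; rfl
          calc π = π * (e * conj e) := by rw [h11, mul_one]
            _ = π * e * conj e := by ring
            _ = (⟨qz, 0⟩ : Ei) * conj e := by rw [← he]
        have hqAn : (⟨qz, 0⟩ : Ei) ∣ An n := (hq_dvd_π.trans hπA).trans hAdvd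
        have h3 : qz ∣ 3 := ratDvd hqAn
        have hq3 : qz = 3 := by
          have hna : qn ∣ 3 := by
            have h4 := Int.natAbs_dvd_natAbs.mpr h3
            simpa [hqzdef] using h4
          rcases (Nat.prime_three.eq_one_or_self_of_dvd qn hna) with hh | hh
          · exact absurd hh hqn.ne_one
          · rw [hqzdef, hh]; rfl
        have hNπ9 : Nm π = 9 := by rw [hNπ, hq3]; norm_num
        rw [hq3, three_factor] at hπq
        rcases hπprime.2.2 _ _ hπq with hh | hh
        · have h5 := Nm_dvd hh
          rw [hNπ9, Nm_lam] at h5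
          omega
        · have h5 := Nm_dvd hh
          rw [hNπ9, Nm_lam'] at h5
          omega


end Ei

end Stmt6Aux

open Stmt6Aux Stmt6Aux.Ei in
/-- Let `s > 0` divide `Δ_n = n² + 3n + 9` and let `ζ` be a primitive cube root
of unity, `A_n = n + 3(1+ζ)`. There are exactly `6` ordered pairs `(a₀, a₁)` of
integers with `s = a₀² - a₀a₁ + a₁²` and `a₀ + a₁ζ ∣ A_n` in `ℤ[ζ]`; and if
`(a₀, a₁)` is one of them, then the set of all of them is
`{(a₀,a₁), (-a₀,-a₁), (a₁,-(a₀-a₁)), (-a₁,a₀-a₁), (a₀-a₁,a₀), (-(a₀-a₁),-a₀)}`. -/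
theorem stmt6 (n s : ℤ) (hs : 0 < s) (hdvd : s ∣ n ^ 2 + 3 * n + 9)
    (ζ : ℂ) (hζ : IsPrimitiveRoot ζ 3) :
    {p : ℤ × ℤ | s = p.1 ^ 2 - p.1 * p.2 + p.2 ^ 2 ∧
        ∃ x y : ℤ, (n : ℂ) + 3 * (1 + ζ) =
          ((p.1 : ℂ) + p.2 * ζ) * ((x : ℂ) + y * ζ)}.ncard = 6 ∧
    ∀ a₀ a₁ : ℤ,
      (a₀, a₁) ∈ {p : ℤ × ℤ | s = p.1 ^ 2 - p.1 * p.2 + p.2 ^ 2 ∧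
        ∃ x y : ℤ, (n : ℂ) + 3 * (1 + ζ) =
          ((p.1 : ℂ) + p.2 * ζ) * ((x : ℂ) + y * ζ)} →
      {p : ℤ × ℤ | s = p.1 ^ 2 - p.1 * p.2 + p.2 ^ 2 ∧
        ∃ x y : ℤ, (n : ℂ) + 3 * (1 + ζ) =
          ((p.1 : ℂ) + p.2 * ζ) * ((x : ℂ) + y * ζ)} =
        {(a₀, a₁), (-a₀, -a₁), (a₁, -(a₀ - a₁)), (-a₁, a₀ - a₁),
          (a₀ - a₁, a₀), (-(a₀ - a₁), -a₀)} := by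
  classical
  set S : Set (ℤ × ℤ) := {p : ℤ × ℤ | s = p.1 ^ 2 - p.1 * p.2 + p.2 ^ 2 ∧
        ∃ x y : ℤ, (n : ℂ) + 3 * (1 + ζ) =
          ((p.1 : ℂ) + p.2 * ζ) * ((x : ℂ) + y * ζ)} with hSdef
  -- basic facts about ζ
  have hζ3 : ζ ^ 3 = 1 := hζ.pow_eq_one
  have hζ1 : ζ ≠ 1 := hζ.ne_one (by norm_num)
  have hsum : ζ ^ 2 + ζ + 1 = 0 := by
    have h1 : (ζ - 1) * (ζ ^ 2 + ζ + 1) = 0 := by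
      have h2 : (ζ - 1) * (ζ ^ 2 + ζ + 1) = ζ ^ 3 - 1 := by ring
      rw [h2, hζ3]; ring
    rcases mul_eq_zero.mp h1 with h | h
    · exact absurd (by linear_combination h) hζ1
    · exact h
  have him : ζ.im ≠ 0 := by
    intro h0
    have hre : ζ = (ζ.re : ℂ) := Complex.ext rfl (by simp [h0])
    have h3 : (ζ.re : ℂ) ^ 3 = 1 := by rw [← hre]; exact hζ3
    have h3' : ζ.re ^ 3 = 1 := by exact_mod_cast h3
    have h4 : ζ.re = 1 := by nlinarith [sq_nonneg (ζ.re - 1), sq_nonneg (ζ.re + 1), sq_nonneg ζ.re]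
    exact hζ1 (by rw [hre, h4]; norm_num)
  -- the embedding of `Ei` into `ℂ`
  set φ : Ei → ℂ := fun p => (p.x : ℂ) + (p.y : ℂ) * ζ with hφdef
  have hφmul : ∀ p q : Ei, φ (p * q) = φ p * φ q := by
    intro p q
    simp only [hφdef, mul_x, mul_y]
    push_cast
    linear_combination (-((p.y : ℂ) * q.y)) * hsum
  have hφinj : ∀ p q : Ei, φ p = φ q → p = q := by
    intro p q h
    have h2 : ((p.y - q.y : ℤ) : ℂ) * ζ = ((q.x - p.x : ℤ) : ℂ) := by
      push_cast
      simp only [hφdef] at h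
      linear_combination h
    have h3 : ((p.y - q.y : ℤ) : ℝ) * ζ.im = 0 := by
      have h4 := congrArg Complex.im h2
      simpa using h4
    have hy : p.y = q.y := by
      rcases mul_eq_zero.mp h3 with hh | hh
      · have : (p.y - q.y : ℤ) = 0 := by exact_mod_cast hh
        omega
      · exact absurd hh him
    have hx : p.x = q.x := by
      simp only [hφdef, hy] at h
      have h5 : (p.x : ℂ) = (q.x : ℂ) := by linear_combination h
      exact_mod_cast h5
    exact Ei.ext hx hy
  have hφAn : φ (An n) = (n : ℂ) + 3 * (1 + ζ) := by
    simp only [hφdef, An]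
    push_cast
    ring
  -- membership in `S` in terms of `Ei`
  have hSiff : ∀ p : ℤ × ℤ, p ∈ S ↔
      (s = Nm ⟨p.1, p.2⟩ ∧ (⟨p.1, p.2⟩ : Ei) ∣ An n) := by
    intro p
    constructor
    · rintro ⟨h1, x, y, h2⟩
      refine ⟨h1, ⟨⟨x, y⟩, hφinj _ _ ?_⟩⟩
      rw [hφAn, hφmul]
      exact h2
    · rintro ⟨h1, ⟨r, hr⟩⟩
      refine ⟨h1, r.x, r.y, ?_⟩
      have h6 := congrArg φ hr
      rw [hφmul] at h6
      rw [← hφAn, h6]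
  -- the orbit description
  have horbit : ∀ a b : ℤ, (a, b) ∈ S →
      S = {(a, b), (-a, -b), (b, -(a - b)), (-b, a - b), (a - b, a), (-(a - b), -a)} := by
    intro a b hab
    obtain ⟨hNab, hdab⟩ := (hSiff (a, b)).mp hab
    have hab0 : (⟨a, b⟩ : Ei) ≠ 0 := by
      intro h0
      rw [h0] at hNab
      simp [Nm] at hNab
      omega
    ext ⟨c, d⟩
    simp only [Set.mem_insert_iff, Set.mem_singleton_iff, Prod.mk.injEq]
    constructor
    · intro hcd
      obtain ⟨hNcd, hdcd⟩ := (hSiff (c, d)).mp hcd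
      obtain ⟨u, hNu, hu⟩ := unique_up_to_unit hab0 (by rw [← hNab, ← hNcd]) hdab hdcd
      rcases unit_cases hNu with rfl | rfl | rfl | rfl | rfl | rfl <;>
        · rw [Ei.ext_iff] at hu
          simp at hu
          omega
    · intro hcd
      have key : ∀ u : Ei, Nm u = 1 → ∀ c' d' : ℤ, (⟨c', d'⟩ : Ei) = ⟨a, b⟩ * u →
          (c', d') ∈ S := by
        intro u hNu c' d' hmu
        refine (hSiff (c', d')).mpr ⟨?_, ?_⟩
        · show s = Nm ⟨c', d'⟩
          rw [hmu, Nm_mul, hNu, mul_one, ← hNab]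
        · show (⟨c', d'⟩ : Ei) ∣ An n
          rw [hmu]
          exact (IsUnit.mul_right_dvd (isUnit_iff_nm.mpr hNu)).mpr hdab
      rcases hcd with ⟨rfl, rfl⟩ | ⟨rfl, rfl⟩ | ⟨rfl, rfl⟩ | ⟨rfl, rfl⟩ | ⟨rfl, rfl⟩ | ⟨rfl, rfl⟩
      · exact key ⟨1, 0⟩ (by simp [Nm]) _ _ (by ext <;> simp)
      · exact key ⟨-1, 0⟩ (by simp [Nm]) _ _ (by ext <;> simp)
      · exact key ⟨0, -1⟩ (by simp [Nm]) _ _ (by ext <;> simp <;> ring)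
      · exact key ⟨0, 1⟩ (by simp [Nm]) _ _ (by ext <;> simp <;> ring)
      · exact key ⟨1, 1⟩ (by simp [Nm]) _ _ (by ext <;> simp <;> ring)
      · exact key ⟨-1, -1⟩ (by simp [Nm]) _ _ (by ext <;> simp <;> ring)
  -- cardinality of an orbit
  have hcard : ∀ a b : ℤ, ¬(a = 0 ∧ b = 0) →
      ({(a, b), (-a, -b), (b, -(a - b)), (-b, a - b), (a - b, a), (-(a - b), -a)} :
        Set (ℤ × ℤ)).ncard = 6 := by
    intro a b hab
    have f5 : ({(-(a - b), -a)} : Set (ℤ × ℤ)).Finite := Set.finite_singleton _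
    have f4 := f5.insert ((a - b, a) : ℤ × ℤ)
    have f3 := f4.insert ((-b, a - b) : ℤ × ℤ)
    have f2 := f3.insert ((b, -(a - b)) : ℤ × ℤ)
    have f1 := f2.insert ((-a, -b) : ℤ × ℤ)
    rw [Set.ncard_insert_of_notMem (by
        simp only [Set.mem_insert_iff, Set.mem_singleton_iff, Prod.mk.injEq]; omega) f1,
      Set.ncard_insert_of_notMem (by
        simp only [Set.mem_insert_iff, Set.mem_singleton_iff, Prod.mk.injEq]; omega) f2,
      Set.ncard_insert_of_notMem (by
        simp only [Set.mem_insert_iff, Set.mem_singleton_iff, Prod.mk.injEq]; omega) f3,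
      Set.ncard_insert_of_notMem (by
        simp only [Set.mem_insert_iff, Set.mem_singleton_iff, Prod.mk.injEq]; omega) f4,
      Set.ncard_insert_of_notMem (by
        simp only [Set.mem_singleton_iff, Prod.mk.injEq]; omega) f5,
      Set.ncard_singleton]
  constructor
  · -- cardinality
    have hdvdN : s ∣ Nm (An n) := by rw [Nm_An]; exact hdvd
    obtain ⟨p₀, hp₀dvd, hp₀Nm⟩ := exists_nm_divisor n s.toNat s (by omega) (by omega)
      (An n) dvd_rfl hdvdN
    have hp₀mem : (p₀.x, p₀.y) ∈ S := by
      refine (hSiff (p₀.x, p₀.y)).mpr ⟨?_, ?_⟩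
      · show s = Nm ⟨p₀.x, p₀.y⟩
        rw [← hp₀Nm]
      · exact hp₀dvd
    have hne : ¬(p₀.x = 0 ∧ p₀.y = 0) := by
      rintro ⟨h1, h2⟩
      rw [← hp₀Nm] at hs
      simp [Nm, h1, h2] at hs
    rw [horbit p₀.x p₀.y hp₀mem]
    exact hcard p₀.x p₀.y hne
  · -- the orbit description
    intro a₀ a₁ hmem
    exact horbit a₀ a₁ hmem
end

section
/- Let n be an integer with 3 ∤ n or n ≡ 12 (mod 27), and let a₀, a₁, m and ε ∈ {±1} be the integers defined from Δ_n = de²c³ as above. Set α = (a₀ρ_n + a₁ρ_n' + m)/(ec²). Then the minimal polynomial over ℚ of ±α (a generator of a normal integral basis of L_n) is F_±(X) = X³ ∓ εX² + (1/(e²c⁴))(a₀a₁n² + 2(a₀+a₁)mn − ec(n+3) + 3m²)X ∓ (1/(e³c⁶))(a₀a₁mn² − a₀²a₁n(n+3) + (a₀+a₁)m²n − ecm(n+3) + a₀a₁(a₀−a₁)(n²+3n+6) + a₀³ + a₁³ + m³ − 3a₀²a₁), where the double signs are taken in the same order. -/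
open NumberField Polynomial

/-- `α` is a generator of a normal integral basis of `K`:
its Galois conjugates `σ(α)` form a `ℤ`-basis of the ring of integers of `K`. -/
def IsNIBGen (K : Type*) [Field K] [NumberField K] (α : K) : Prop :=
  ∃ b : Module.Basis (K ≃ₐ[ℚ] K) ℤ (𝓞 K), ∀ σ : K ≃ₐ[ℚ] K, (b σ : K) = σ α

lemma shanks_irred (n : ℤ) :
    Irreducible (X ^ 3 - C (n : ℚ) * X ^ 2 - C ((n : ℚ) + 3) * X - 1 : ℚ[X]) := by
  set p : ℚ[X] := X ^ 3 - C (n : ℚ) * X ^ 2 - C ((n : ℚ) + 3) * X - 1 with hp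
  have hdeg : p.natDegree = 3 := by unfold p; compute_degree!
  rw [irreducible_iff_roots_eq_zero_of_degree_le_three (by omega) (by omega)]
  rw [Multiset.eq_zero_iff_forall_notMem]
  intro r hr
  have hp0 : p ≠ 0 := fun h => by simp [h] at hdeg
  have hroot : p.IsRoot r := (mem_roots hp0).mp hr
  set pZ : ℤ[X] := X ^ 3 - C n * X ^ 2 - C (n + 3) * X - 1 with hpZ
  have hmonic : pZ.Monic := by unfold pZ; monicity!
  have hmap : pZ.map (Int.castRingHom ℚ) = p := by
    unfold p pZ
    simp only [Polynomial.map_sub, Polynomial.map_mul, Polynomial.map_pow, Polynomial.map_one,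
      Polynomial.map_X, map_C, Int.coe_castRingHom]
    push_cast
    ring
  have haev : aeval r pZ = 0 := by
    rw [aeval_def, eval₂_eq_eval_map]
    show (pZ.map (Int.castRingHom ℚ)).eval r = 0
    rw [hmap]; exact hroot
  obtain ⟨r', hr', hdvd⟩ := exists_integer_of_is_root_of_monic hmonic haev
  have hc0 : pZ.coeff 0 = -1 := by unfold pZ; simp
  rw [hc0] at hdvd
  have : r' = 1 ∨ r' = -1 := by
    rcases Int.isUnit_iff.mp (isUnit_of_dvd_unit hdvd (by norm_num)) with h | h <;> tauto
  have heval : (r' : ℚ) ^ 3 - (n : ℚ) * (r' : ℚ) ^ 2 - ((n : ℚ) + 3) * (r' : ℚ) - 1 = 0 := by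
    rw [hr'] at haev
    unfold pZ at haev
    simpa [map_ofNat] using haev
  have : (r' : ℤ) ^ 3 - n * r' ^ 2 - (n + 3) * r' - 1 = 0 := by exact_mod_cast heval
  rcases ‹r' = 1 ∨ r' = -1› with rfl | rfl <;> omega

lemma minpoly_eq_of_deg3 {K : Type*} [Field K] [NumberField K] (x : K)
    (hfr : Module.finrank ℚ K = 3) (hx : ∀ q : ℚ, algebraMap ℚ K q ≠ x)
    (p : ℚ[X]) (hmonic : p.Monic) (hdeg : p.natDegree = 3) (h0 : aeval x p = 0) :
    minpoly ℚ x = p := by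
  have hint : IsIntegral ℚ x := .of_finite ℚ x
  have hdvd3 : (minpoly ℚ x).natDegree ∣ 3 := hfr ▸ minpoly.degree_dvd hint
  have hne1 : (minpoly ℚ x).natDegree ≠ 1 := by
    intro h
    obtain ⟨q, hq⟩ := minpoly.natDegree_eq_one_iff.mp h
    exact hx q hq
  have h3 : (minpoly ℚ x).natDegree = 3 := by
    rcases Nat.prime_three.eq_one_or_self_of_dvd _ hdvd3 with h | h
    · exact absurd h hne1
    · exact h
  have hdvd : minpoly ℚ x ∣ p := minpoly.dvd ℚ x h0
  exact eq_of_monic_of_associated (minpoly.monic hint) hmonic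
    (associated_of_dvd_of_natDegree_le hdvd hmonic.ne_zero (by rw [h3, hdeg]))

set_option maxHeartbeats 2000000 in
/-- The minimal polynomial over `ℚ` of `±α`, where
`α = (a₀ρ + a₁ρ' + m)/(ec²)` is the generator of a normal integral basis of
the simplest cubic field `L_n`, is
`F_±(X) = X³ ∓ εX² + ((a₀a₁n² + 2(a₀+a₁)mn - ec(n+3) + 3m²)/(e²c⁴))X
∓ (a₀a₁mn² - a₀²a₁n(n+3) + (a₀+a₁)m²n - ecm(n+3) + a₀a₁(a₀-a₁)(n²+3n+6)
+ a₀³ + a₁³ + m³ - 3a₀²a₁)/(e³c⁶)`. -/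
theorem stmt13 (n : ℤ) (d e c : ℤ) (hd : 0 < d) (he : 0 < e) (hc : 0 < c)
    (hdsf : Squarefree d) (hesf : Squarefree e) (hde : IsCoprime d e)
    (hΔ : n ^ 2 + 3 * n + 9 = d * e ^ 2 * c ^ 3)
    (h3 : ¬ (3 ∣ n) ∨ n % 27 = 12)
    (ζ : ℂ) (hζ : IsPrimitiveRoot ζ 3)
    (a₀ a₁ : ℤ) (ha : e * c = a₀ ^ 2 - a₀ * a₁ + a₁ ^ 2)
    (hdvd : ∃ x y : ℤ, (n : ℂ) + 3 * (1 + ζ) =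
      ((a₀ : ℂ) + a₁ * ζ) * ((x : ℂ) + y * ζ))
    (ε : ℤ) (hε : ε = 1 ∨ ε = -1)
    (hε₁ : ¬ (3 ∣ n) → (3 : ℤ) ∣ ε - n * (a₀ + a₁))
    (hε₂ : n % 27 = 12 → (3 : ℤ) ∣ ε - a₀)
    (m : ℤ) (hm : 3 * m = ε * e * c ^ 2 - n * (a₀ + a₁))
    (K : Type*) [Field K] [NumberField K]
    (ρ ρ' : K) (hρ : ρ ^ 3 - n * ρ ^ 2 - (n + 3) * ρ - 1 = 0)
    (hgen : Algebra.adjoin ℚ {ρ} = ⊤)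
    (hρ' : ρ' = -1 / (1 + ρ))
    (α : K) (hα : α = ((a₀ : K) * ρ + a₁ * ρ' + m) / (e * c ^ 2))
    (A B : ℚ)
    (hA : A = ((a₀ * a₁ * n ^ 2 + 2 * (a₀ + a₁) * m * n - e * c * (n + 3)
        + 3 * m ^ 2 : ℤ) : ℚ) / ((e ^ 2 * c ^ 4 : ℤ) : ℚ))
    (hB : B = ((a₀ * a₁ * m * n ^ 2 - a₀ ^ 2 * a₁ * n * (n + 3)
        + (a₀ + a₁) * m ^ 2 * n - e * c * m * (n + 3)
        + a₀ * a₁ * (a₀ - a₁) * (n ^ 2 + 3 * n + 6)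
        + a₀ ^ 3 + a₁ ^ 3 + m ^ 3 - 3 * a₀ ^ 2 * a₁ : ℤ) : ℚ)
        / ((e ^ 3 * c ^ 6 : ℤ) : ℚ)) :
    minpoly ℚ α = X ^ 3 - C (ε : ℚ) * X ^ 2 + C A * X - C B ∧
    minpoly ℚ (-α) = X ^ 3 + C (ε : ℚ) * X ^ 2 + C A * X + C B := by
  have hcK : (c : K) ≠ 0 := Int.cast_ne_zero.mpr hc.ne'
  have heK : (e : K) ≠ 0 := Int.cast_ne_zero.mpr he.ne'
  have hNe : (e : K) * (c : K) ^ 2 ≠ 0 := mul_ne_zero heK (pow_ne_zero _ hcK)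
  have h1ρ : (1 : K) + ρ ≠ 0 := by
    intro h
    have hρm : ρ = -1 := by linear_combination h
    rw [hρm] at hρ
    have : (1 : K) = 0 := by linear_combination hρ
    exact one_ne_zero this
  have hρ'2 : ρ' = ρ ^ 2 - ((n : K) + 1) * ρ - 2 := by
    rw [hρ']
    field_simp
    linear_combination -hρ
  have haK : (e : K) * (c : K) = (a₀:K)^2 - (a₀:K)*(a₁:K) + (a₁:K)^2 := by exact_mod_cast ha
  have hmK : (3:K) * (m:K) = (ε:K)*(e:K)*(c:K)^2 - (n:K)*((a₀:K)+(a₁:K)) := by exact_mod_cast hm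
  set P : K := (a₀:K)*ρ + (a₁:K)*(ρ^2 - ((n:K)+1)*ρ - 2) + (m:K) with hPdef
  have hkey : (P^3 - (ε:K)*((e:K)*(c:K)^2)*P^2 + ((a₀:K)*(a₁:K)*(n:K)^2 + 2*((a₀:K)+(a₁:K))*(m:K)*(n:K) - (e:K)*(c:K)*((n:K)+3) + 3*(m:K)^2)*P - ((a₀:K)*(a₁:K)*(m:K)*(n:K)^2 - (a₀:K)^2*(a₁:K)*(n:K)*((n:K)+3) + ((a₀:K)+(a₁:K))*(m:K)^2*(n:K) - (e:K)*(c:K)*(m:K)*((n:K)+3) + (a₀:K)*(a₁:K)*((a₀:K)-(a₁:K))*((n:K)^2+3*(n:K)+6) + (a₀:K)^3 + (a₁:K)^3 + (m:K)^3 - 3*(a₀:K)^2*(a₁:K))) = 0 := by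
    have h0 : (c:K) * (P^3 - (ε:K)*((e:K)*(c:K)^2)*P^2 + ((a₀:K)*(a₁:K)*(n:K)^2 + 2*((a₀:K)+(a₁:K))*(m:K)*(n:K) - (e:K)*(c:K)*((n:K)+3) + 3*(m:K)^2)*P - ((a₀:K)*(a₁:K)*(m:K)*(n:K)^2 - (a₀:K)^2*(a₁:K)*(n:K)*((n:K)+3) + ((a₀:K)+(a₁:K))*(m:K)^2*(n:K) - (e:K)*(c:K)*(m:K)*((n:K)+3) + (a₀:K)*(a₁:K)*((a₀:K)-(a₁:K))*((n:K)^2+3*(n:K)+6) + (a₀:K)^3 + (a₁:K)^3 + (m:K)^3 - 3*(a₀:K)^2*(a₁:K))) = 0 := by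
      rw [hPdef]
      linear_combination ((c:K) * ((((-6) : K) * (a₁:K)^2 * (m:K) + (2 : K) * (a₁:K)^2 * (ε:K) * (c:K)^2 * (e:K) + (3 : K) * (a₁:K)^3 + (6 : K) * (a₀:K) * (a₁:K) * (m:K) + ((-2) : K) * (a₀:K) * (a₁:K) * (ε:K) * (c:K)^2 * (e:K) + ((-3) : K) * (a₀:K)^2 * (a₁:K) + (a₀:K)^3 + ((-3) : K) * (n:K) * (a₁:K)^2 * (m:K) + (n:K) * (a₁:K)^2 * (ε:K) * (c:K)^2 * (e:K) + (3 : K) * (n:K) * (a₀:K) * (a₁:K)^2 + ((-1) : K) * (n:K)^2 * (a₁:K)^3) + ((3 : K) * (a₁:K)^2 * (m:K) + ((-1) : K) * (a₁:K)^2 * (ε:K) * (c:K)^2 * (e:K) + ((-6) : K) * (a₀:K) * (a₁:K)^2 + (3 : K) * (a₀:K)^2 * (a₁:K) + (4 : K) * (n:K) * (a₁:K)^3 + ((-3) : K) * (n:K) * (a₀:K) * (a₁:K)^2 + (n:K)^2 * (a₁:K)^3) * ρ^1 + (((-3) : K) * (a₁:K)^3 + (3 : K) * (a₀:K) * (a₁:K)^2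 + ((-2) : K) * (n:K) * (a₁:K)^3) * ρ^2 + ((a₁:K)^3) * ρ^3)) * hρ + ((c:K) * (((m:K)^2 + ((-4) : K) * (a₁:K) * (m:K) + (2 : K) * (a₁:K)^2 + (2 : K) * (a₀:K) * (a₁:K) + ((-1) : K) * (n:K) * (a₁:K)^2) + (((-2) : K) * (a₁:K) * (m:K) + ((-1) : K) * (a₁:K)^2 + (2 : K) * (a₀:K) * (m:K) + (2 : K) * (a₀:K) * (a₁:K) + ((-2) : K) * (n:K) * (a₁:K) * (m:K) + ((-1) : K) * (n:K) * (a₁:K)^2 + (2 : K) * (n:K) * (a₀:K) * (a₁:K) + ((-1) : K) * (n:K)^2 * (a₁:K)^2) * ρ^1 + ((2 : K) * (a₁:K) * (m:K) + ((-2) : K) * (a₀:K) * (a₁:K) + (a₀:K)^2 + (n:K) * (a₁:K)^2) * ρ^2)) * hmK + (((6 : K) * (a₁:K) * (c:K) + (2 : K) * (n:K) * (a₁:K) * (c:K)) + ((3 : K) * (a₁:K) * (c:K) + ((-3) : K) * (a₀:K) * (c:K) + (4 : K) * (n:K) * (a₁:K) * (c:K) + ((-1) : K) * (n:K) * (a₀:K)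 * (c:K) + (n:K)^2 * (a₁:K) * (c:K)) * ρ^1 + (((-3) : K) * (a₁:K) * (c:K) + ((-1) : K) * (n:K) * (a₁:K) * (c:K)) * ρ^2) * haK
    exact (mul_eq_zero.mp h0).resolve_left hcK
  have hαP : α = P / ((e:K) * (c:K)^2) := by rw [hα, hρ'2]
  have hP3 : P = α * ((e:K) * (c:K)^2) := by
    rw [hαP, div_mul_cancel₀ _ hNe]
  have hAK2 : ((A : ℚ) : K) * ((e:K)^2 * (c:K)^4)
      = ((a₀:K)*(a₁:K)*(n:K)^2 + 2*((a₀:K)+(a₁:K))*(m:K)*(n:K) - (e:K)*(c:K)*((n:K)+3) + 3*(m:K)^2) := by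
    rw [hA]; push_cast
    exact div_mul_cancel₀ _ (mul_ne_zero (pow_ne_zero _ heK) (pow_ne_zero _ hcK))
  have hBK2 : ((B : ℚ) : K) * ((e:K)^3 * (c:K)^6)
      = ((a₀:K)*(a₁:K)*(m:K)*(n:K)^2 - (a₀:K)^2*(a₁:K)*(n:K)*((n:K)+3) + ((a₀:K)+(a₁:K))*(m:K)^2*(n:K) - (e:K)*(c:K)*(m:K)*((n:K)+3) + (a₀:K)*(a₁:K)*((a₀:K)-(a₁:K))*((n:K)^2+3*(n:K)+6) + (a₀:K)^3 + (a₁:K)^3 + (m:K)^3 - 3*(a₀:K)^2*(a₁:K)) := by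
    rw [hB]; push_cast
    exact div_mul_cancel₀ _ (mul_ne_zero (pow_ne_zero _ heK) (pow_ne_zero _ hcK))
  have hev0 : α^3 - (ε:K)*α^2 + ((A : ℚ) : K)*α - ((B : ℚ) : K) = 0 := by
    apply mul_left_cancel₀ (pow_ne_zero 3 hNe)
    rw [mul_zero]
    linear_combination hkey
      + ((ε:K)*((e:K)*(c:K)^2)*(P + α*((e:K)*(c:K)^2))
        - ((α*((e:K)*(c:K)^2))^2 + α*((e:K)*(c:K)^2)*P + P^2)
        - ((A : ℚ) : K)*((e:K)^2*(c:K)^4)) * hP3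
      + P * hAK2 - hBK2
  -- finrank
  have hintρ : IsIntegral ℚ ρ := IsIntegral.of_finite ℚ ρ
  have hminρ : minpoly ℚ ρ = X ^ 3 - C (n : ℚ) * X ^ 2 - C ((n : ℚ) + 3) * X - 1 := by
    refine (minpoly.eq_of_irreducible_of_monic (shanks_irred n) ?_ ?_).symm
    · simp only [map_sub, map_mul, map_pow, map_one, aeval_X, aeval_C, eq_ratCast]
      push_cast
      linear_combination hρ
    · monicity!
  have hfr : Module.finrank ℚ K = 3 := by
    have htop : (IntermediateField.adjoin ℚ {ρ} : IntermediateField ℚ K) = ⊤ := by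
      apply IntermediateField.toSubalgebra_injective
      rw [IntermediateField.adjoin_simple_toSubalgebra_of_isAlgebraic hintρ.isAlgebraic, hgen,
        IntermediateField.top_toSubalgebra]
    have h1 := IntermediateField.adjoin.finrank hintρ
    rw [htop, IntermediateField.finrank_top', hminρ] at h1
    rw [h1]
    compute_degree!
  -- α not rational
  have hdegρ : (minpoly ℚ ρ).degree = 3 := by rw [hminρ]; compute_degree!
  have hab : ¬ (a₀ = 0 ∧ a₁ = 0) := by
    rintro ⟨h0, h1⟩
    rw [h0, h1] at ha
    nlinarith [mul_pos he hc]
  have hxα : ∀ q : ℚ, algebraMap ℚ K q ≠ α := by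
    intro q hq
    have hqK : (q : K) = α := by rw [← hq]; simp [eq_ratCast]
    have h1 : (a₁:K) * ρ^2 + ((a₀:K) - (a₁:K)*((n:K)+1)) * ρ
        + ((m:K) - 2*(a₁:K) - (q:K)*((e:K)*(c:K)^2)) = 0 := by
      have h2 : (q:K) * ((e:K)*(c:K)^2) = P := by
        rw [hqK, hαP, div_mul_cancel₀ _ hNe]
      linear_combination -h2
    set pq : ℚ[X] := C (a₁:ℚ) * X^2 + C ((a₀:ℚ) - (a₁:ℚ)*((n:ℚ)+1)) * X
      + C ((m:ℚ) - 2*(a₁:ℚ) - q*((e:ℚ)*(c:ℚ)^2)) with hpqdef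
    have haev : aeval ρ pq = 0 := by
      unfold pq
      simp only [map_add, map_mul, map_pow, aeval_X, aeval_C, eq_ratCast]
      push_cast
      linear_combination h1
    have hco2 : pq.coeff 2 = (a₁ : ℚ) := by
      unfold pq
      simp only [coeff_add, coeff_C_mul, coeff_X_pow, coeff_X, coeff_C]
      norm_num
    have hco1 : pq.coeff 1 = (a₀:ℚ) - (a₁:ℚ)*((n:ℚ)+1) := by
      unfold pq
      simp only [coeff_add, coeff_C_mul, coeff_X_pow, coeff_X, coeff_C]
      norm_num
    have hpq0 : pq ≠ 0 := by
      intro hz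
      rw [hz] at hco2 hco1
      simp only [coeff_zero] at hco2 hco1
      by_cases h1' : a₁ = 0
      · have h0' : a₀ ≠ 0 := fun h0 => hab ⟨h0, h1'⟩
        apply h0'
        have : (a₁:ℚ) = 0 := by exact_mod_cast hco2.symm
        rw [this] at hco1
        exact_mod_cast (by linarith [hco1.symm] : (a₀:ℚ) = 0)
      · exact h1' (by exact_mod_cast hco2.symm)
    have hle := minpoly.degree_le_of_ne_zero ℚ ρ hpq0 haev
    rw [hdegρ] at hle
    have hd2 : pq.degree ≤ 2 := by
      unfold pq
      compute_degree
    have : (3 : WithBot ℕ) ≤ 2 := le_trans hle hd2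
    norm_num at this
  have hxβ : ∀ q : ℚ, algebraMap ℚ K q ≠ -α := by
    intro q hq
    apply hxα (-q)
    rw [map_neg, hq, neg_neg]
  constructor
  · apply minpoly_eq_of_deg3 α hfr hxα
    · monicity!
    · compute_degree!
    · simp only [map_add, map_sub, map_mul, map_pow, map_one, aeval_X, aeval_C]
      rw [eq_ratCast (algebraMap ℚ K) A, eq_ratCast (algebraMap ℚ K) B,
        eq_ratCast (algebraMap ℚ K) (ε:ℚ)]
      push_cast
      linear_combination hev0
  · apply minpoly_eq_of_deg3 (-α) hfr hxβ
    · monicity!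
    · compute_degree!
    · simp only [map_add, map_sub, map_mul, map_pow, map_one, aeval_X, aeval_C]
      rw [eq_ratCast (algebraMap ℚ K) A, eq_ratCast (algebraMap ℚ K) B,
        eq_ratCast (algebraMap ℚ K) (ε:ℚ)]
      push_cast
      linear_combination -hev0
end
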